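/- arXiv:1703.00515 — 2 statements merged into one kernel-verified Lean document; each statement's English description precedes it below -/
import Mathlib

section
/- Let l be a filter on a type α and let ρ₁, ρ₂ : α → ℝ be functions that are everywhere strictly positive. If the quotient ρ₂/ρ₁ tends to 0 along l, then there exists an everywhere strictly positive function ρ₀ : α → ℝ (for instance the geometric mean √(ρ₁ρ₂)) such that ρ₂/ρ₀ tends to 0 along l and ρ₀/ρ₁ tends to 0 along l. -/
/-- Intermediate ideals: given strictly positive weights ρ₁, ρ₂ with ρ₂/ρ₁ → 0 along `l`,
there is a strictly positive intermediate weight ρ₀ with ρ₂/ρ₀ → 0 and ρ₀/ρ₁ → 0. -/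
theorem intermediate_weight_exists {α : Type*} (l : Filter α) (ρ₁ ρ₂ : α → ℝ)
    (h₁ : ∀ x, 0 < ρ₁ x) (h₂ : ∀ x, 0 < ρ₂ x)
    (h : Filter.Tendsto (fun x => ρ₂ x / ρ₁ x) l (nhds 0)) :
    ∃ ρ₀ : α → ℝ, (∀ x, 0 < ρ₀ x) ∧
      Filter.Tendsto (fun x => ρ₂ x / ρ₀ x) l (nhds 0) ∧
      Filter.Tendsto (fun x => ρ₀ x / ρ₁ x) l (nhds 0) := by
  have hs : Filter.Tendsto (fun x => Real.sqrt (ρ₂ x / ρ₁ x)) l (nhds 0) := by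
    have := (Real.continuous_sqrt.tendsto 0).comp h
    simpa [Function.comp_def] using this
  refine ⟨fun x => Real.sqrt (ρ₁ x * ρ₂ x), fun x => Real.sqrt_pos.2 (mul_pos (h₁ x) (h₂ x)), ?_, ?_⟩
  · refine hs.congr (fun x => ?_)
    have h1 := h₁ x
    have h2 := h₂ x
    rw [show ρ₂ x = Real.sqrt ((ρ₂ x) ^ 2) by rw [Real.sqrt_sq h2.le],
      ← Real.sqrt_div (by positivity)]
    congr 1
    field_simp
    rw [Real.sqrt_sq h2.le]
  · refine hs.congr (fun x => ?_)
    have h1 := h₁ x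
    have h2 := h₂ x
    rw [show ρ₁ x = Real.sqrt ((ρ₁ x) ^ 2) by rw [Real.sqrt_sq h1.le],
      ← Real.sqrt_div (by positivity)]
    congr 1
    field_simp
    rw [Real.sqrt_sq h1.le]
end

section
/- Let f : ℂ → ℂ be analytic (complex differentiable) on the open unit disc {z : |z| < 1} and bounded there, say ‖f(z)‖ < M for all |z| < 1. Let E be the set of angles θ ∈ [0, 2π) such that the radial limit lim_{r→1⁻} f(r·e^{iθ}) exists and equals 0. If E has strictly positive Lebesgue measure, then f is identically zero on the unit disc. -/
open Complex Metric MeasureTheory intervalIntegral Filter Set Real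

lemma hasDerivAt_log_norm {φ : ℝ → ℂ} {φ' : ℂ} {s : ℝ}
    (hφ : HasDerivAt φ φ' s) (h0 : φ s ≠ 0) :
    HasDerivAt (fun t => Real.log ‖φ t‖) ((φ' / φ s).re) s := by
  have hre : HasDerivAt (fun t => (φ t).re) φ'.re s :=
    Complex.reCLM.hasFDerivAt.comp_hasDerivAt s hφ
  have him : HasDerivAt (fun t => (φ t).im) φ'.im s :=
    Complex.imCLM.hasFDerivAt.comp_hasDerivAt s hφ
  have hN : HasDerivAt (fun t => Complex.normSq (φ t))
      ((φ s).re * φ'.re + (φ s).im * φ'.im + ((φ s).re * φ'.re + (φ s).im * φ'.im)) s := by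
    simp only [Complex.normSq_apply]
    have := ((hre.mul hre).add (him.mul him))
    refine this.congr_deriv ?_
    ring
  have hNne : Complex.normSq (φ s) ≠ 0 := (Complex.normSq_pos.mpr h0).ne'
  have hlog := (hN.log hNne).div_const 2
  have heq : (fun t => Real.log ‖φ t‖) = fun t => Real.log (Complex.normSq (φ t)) / 2 := by
    funext t
    rw [Complex.norm_def, Real.log_sqrt (Complex.normSq_nonneg _)]
  rw [heq]
  refine hlog.congr_deriv ?_
  rw [Complex.div_re]
  ring

lemma meanvalue_log_norm {h : ℂ → ℂ} {R r : ℝ}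
    (hd : DifferentiableOn ℂ h (Metric.ball 0 R))
    (hnz : ∀ z ∈ Metric.ball (0 : ℂ) R, h z ≠ 0)
    (hr0 : 0 < r) (hrR : r < R) :
    ∫ θ in (0:ℝ)..(2 * Real.pi), Real.log ‖h ((r : ℂ) * Complex.exp ((θ : ℂ) * Complex.I))‖
      = 2 * Real.pi * Real.log ‖h 0‖ := by
  have hRpos : (0:ℝ) < R := lt_trans hr0 hrR
  set R₂ : ℝ := (r + R) / 2 with hR₂
  have hrR₂ : r < R₂ := by rw [hR₂]; linarith
  have hR₂R : R₂ < R := by rw [hR₂]; linarith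
  have hR₂pos : 0 < R₂ := lt_trans hr0 hrR₂
  set e : ℝ → ℂ := fun θ => Complex.exp ((θ : ℂ) * Complex.I) with he
  have hnorme : ∀ θ : ℝ, ‖e θ‖ = 1 := fun θ => Complex.norm_exp_ofReal_mul_I θ
  have hmem : ∀ (x : ℝ) (θ : ℝ), |x| < R → (x : ℂ) * e θ ∈ Metric.ball (0:ℂ) R := by
    intro x θ hx
    simp only [Metric.mem_ball, dist_zero_right, norm_mul, hnorme, mul_one,
      Complex.norm_real, Real.norm_eq_abs]
    exact hx
  have hmemc : ∀ (x : ℝ) (θ : ℝ), |x| ≤ R₂ → (x : ℂ) * e θ ∈ Metric.closedBall (0:ℂ) R₂ := by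
    intro x θ hx
    simp only [Metric.mem_closedBall, dist_zero_right, norm_mul, hnorme, mul_one,
      Complex.norm_real, Real.norm_eq_abs]
    exact hx
  have han : AnalyticOnNhd ℂ h (Metric.ball 0 R) := hd.analyticOnNhd Metric.isOpen_ball
  have hderivcont : ContinuousOn (deriv h) (Metric.ball 0 R) := han.deriv.continuousOn
  have hcont : ContinuousOn h (Metric.ball 0 R) := hd.continuousOn
  obtain ⟨C, hC⟩ : ∃ C, ∀ z ∈ Metric.closedBall (0:ℂ) R₂, ‖deriv h z / h z‖ ≤ C := by
    have hsub : Metric.closedBall (0:ℂ) R₂ ⊆ Metric.ball 0 R :=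
      Metric.closedBall_subset_ball hR₂R
    have : ContinuousOn (fun z => deriv h z / h z) (Metric.closedBall (0:ℂ) R₂) :=
      ((hderivcont.mono hsub).div (hcont.mono hsub) (fun z hz => hnz z (hsub hz)))
    exact (isCompact_closedBall _ _).exists_bound_of_continuousOn this
  set F : ℝ → ℝ → ℝ := fun x θ => Real.log ‖h ((x : ℂ) * e θ)‖ with hF
  set F' : ℝ → ℝ → ℝ := fun x θ => ((deriv h ((x : ℂ) * e θ) * e θ) / h ((x : ℂ) * e θ)).re
    with hF'
  set A : ℝ → ℝ := fun x => ∫ θ in (0:ℝ)..(2 * Real.pi), F x θ with hA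
  have hFcont : ∀ x : ℝ, |x| < R → Continuous (F x) := by
    intro x hx
    have h1 : Continuous (fun θ : ℝ => (x : ℂ) * e θ) := by fun_prop
    have h2 : Continuous (fun θ : ℝ => h ((x : ℂ) * e θ)) :=
      hcont.comp_continuous h1 (fun θ => hmem x θ hx)
    exact (h2.norm).log (fun θ => norm_ne_zero_iff.mpr (hnz _ (hmem x θ hx)))
  have hGcont : ∀ x : ℝ, |x| < R →
      Continuous (fun θ => (deriv h ((x : ℂ) * e θ) * e θ) / h ((x : ℂ) * e θ)) := by
    intro x hx
    have h1 : Continuous (fun θ : ℝ => (x : ℂ) * e θ) := by fun_prop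
    have h2 : Continuous (fun θ : ℝ => h ((x : ℂ) * e θ)) :=
      hcont.comp_continuous h1 (fun θ => hmem x θ hx)
    have h3 : Continuous (fun θ : ℝ => deriv h ((x : ℂ) * e θ)) :=
      hderivcont.comp_continuous h1 (fun θ => hmem x θ hx)
    have hecont : Continuous e := by fun_prop
    exact ((h3.mul hecont).div h2 (fun θ => hnz _ (hmem x θ hx)))
  have hF'cont : ∀ x : ℝ, |x| < R → Continuous (F' x) :=
    fun x hx => Complex.continuous_re.comp (hGcont x hx)
  have hrabs : |r| < R := by rwa [_root_.abs_of_pos hr0]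
  -- derivative of A vanishes on Icc 0 r
  have hAderiv : ∀ s₀ ∈ Set.Icc (0:ℝ) r, HasDerivAt A 0 s₀ := by
    intro s₀ hs₀
    obtain ⟨hs₀0, hs₀r⟩ := hs₀
    have hs₀abs : |s₀| < R := by rw [_root_.abs_of_nonneg hs₀0]; linarith
    set ε : ℝ := R₂ - r with hε
    have hεpos : 0 < ε := by rw [hε]; linarith
    have hxball : ∀ x ∈ Metric.ball s₀ ε, |x| ≤ R₂ := by
      intro x hx
      rw [Metric.mem_ball, Real.dist_eq] at hx
      have h1 : |x| ≤ |x - s₀| + |s₀| := by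
        calc |x| = |(x - s₀) + s₀| := by ring_nf
          _ ≤ |x - s₀| + |s₀| := abs_add_le _ _
      have h2 : |s₀| ≤ r := by rw [_root_.abs_of_nonneg hs₀0]; exact hs₀r
      have : |x| < ε + r := by linarith
      rw [hε] at this; linarith
    have hxR : ∀ x ∈ Metric.ball s₀ ε, |x| < R :=
      fun x hx => lt_of_le_of_lt (hxball x hx) hR₂R
    have key := intervalIntegral.hasDerivAt_integral_of_dominated_loc_of_deriv_le
      (F := F) (F' := F') (x₀ := s₀) (a := (0:ℝ)) (b := 2 * Real.pi)
      (bound := fun _ => C) (μ := volume) (s := Metric.ball s₀ ε) (Metric.ball_mem_nhds s₀ hεpos)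
      ?_ ?_ ?_ ?_ ?_ ?_
    · obtain ⟨-, hD⟩ := key
      have h0 : (∫ θ in (0:ℝ)..(2 * Real.pi), F' s₀ θ) = 0 := by
        set G : ℝ → ℂ := fun θ => (deriv h ((s₀ : ℂ) * e θ) * e θ) / h ((s₀ : ℂ) * e θ) with hG
        have hGc : Continuous G := hGcont s₀ hs₀abs
        have hre : (∫ θ in (0:ℝ)..(2 * Real.pi), F' s₀ θ)
            = (∫ θ in (0:ℝ)..(2 * Real.pi), G θ).re := by
          have := Complex.reCLM.intervalIntegral_comp_comm (μ := volume) (a := (0:ℝ))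
            (b := 2 * Real.pi) (hGc.intervalIntegrable 0 (2 * Real.pi))
          exact this
        rw [hre]
        rcases eq_or_lt_of_le hs₀0 with hz | hpos
        · -- s₀ = 0
          have : (∫ θ in (0:ℝ)..(2 * Real.pi), G θ)
              = (deriv h 0 / h 0) * ∫ θ in (0:ℝ)..(2 * Real.pi), e θ := by
            rw [← intervalIntegral.integral_const_mul]
            congr 1
            funext θ
            rw [hG, ← hz]
            push_cast
            simp only [zero_mul]
            ring
          rw [this]
          have hI : (Complex.I : ℂ) ≠ 0 := Complex.I_ne_zero
          have hexp : (∫ θ in (0:ℝ)..(2 * Real.pi), e θ) = 0 := by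
            have : (∫ θ in (0:ℝ)..(2 * Real.pi), e θ)
                = ∫ θ in (0:ℝ)..(2 * Real.pi), Complex.exp (Complex.I * θ) := by
              congr 1; funext θ; rw [he]; ring_nf
            rw [this, integral_exp_mul_complex hI]
            have h2pi : Complex.I * ((2 * Real.pi : ℝ) : ℂ) = 2 * Real.pi * Complex.I := by
              push_cast; ring
            rw [h2pi, Complex.exp_two_pi_mul_I]
            simp
          rw [hexp, mul_zero, Complex.zero_re]
        · -- s₀ > 0
          have hcirc : (∮ z in C(0, s₀), deriv h z / h z) = 0 := by
            apply circleIntegral_eq_zero_of_differentiable_on_off_countable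
              (le_of_lt hpos) Set.countable_empty
            · apply (hderivcont.div hcont (fun z hz => hnz z hz)).mono
              intro z hz
              rw [Metric.mem_closedBall] at hz
              rw [Metric.mem_ball]
              calc dist z 0 ≤ s₀ := hz
                _ < R := by linarith
            · intro z hz
              have hzball : z ∈ Metric.ball (0:ℂ) R := by
                rw [Metric.mem_ball] at *
                have := hz.1
                rw [Metric.mem_ball] at this
                calc dist z 0 < s₀ := this
                  _ < R := by linarith
              have hd1 : DifferentiableAt ℂ (deriv h) z := (han.deriv z hzball).differentiableAt
              have hd2 : DifferentiableAt ℂ h z :=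
                hd.differentiableAt (Metric.isOpen_ball.mem_nhds hzball)
              exact hd1.div hd2 (hnz z hzball)
          have hunfold : (∮ z in C(0, s₀), deriv h z / h z)
              = ∫ θ in (0:ℝ)..(2 * Real.pi),
                  ((s₀ : ℂ) * Complex.I) * G θ := by
            rw [circleIntegral]
            congr 1
            funext θ
            rw [deriv_circleMap, circleMap_zero, hG]
            have hne : h ((s₀:ℂ) * e θ) ≠ 0 := hnz _ (hmem s₀ θ hs₀abs)
            rw [he]
            simp only [smul_eq_mul]
            field_simp
          rw [hunfold, intervalIntegral.integral_const_mul] at hcirc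
          have hs₀I : ((s₀ : ℂ) * Complex.I) ≠ 0 := by
            apply mul_ne_zero _ Complex.I_ne_zero
            simpa using ne_of_gt hpos
          have := mul_eq_zero.mp hcirc
          rcases this with h' | h'
          · exact absurd h' hs₀I
          · rw [h', Complex.zero_re]
      rw [h0] at hD
      exact hD
    · -- hF_meas
      filter_upwards [Metric.ball_mem_nhds s₀ hεpos] with x hx
      exact (hFcont x (hxR x hx)).aestronglyMeasurable
    · exact (hFcont s₀ hs₀abs).intervalIntegrable _ _
    · exact (hF'cont s₀ hs₀abs).aestronglyMeasurable
    · -- h_bound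
      apply Filter.Eventually.of_forall
      intro θ _ x hx
      have hmemc' : (x : ℂ) * e θ ∈ Metric.closedBall (0:ℂ) R₂ := hmemc x θ (hxball x hx)
      have : ‖F' x θ‖ ≤ ‖(deriv h ((x : ℂ) * e θ) * e θ) / h ((x : ℂ) * e θ)‖ := by
        rw [hF']
        exact Complex.abs_re_le_norm _
      apply this.trans
      have heq : ‖(deriv h ((x : ℂ) * e θ) * e θ) / h ((x : ℂ) * e θ)‖
          = ‖deriv h ((x : ℂ) * e θ) / h ((x : ℂ) * e θ)‖ := by
        rw [norm_div, norm_div, norm_mul, hnorme, mul_one]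
      rw [heq]
      exact hC _ hmemc'
    · exact intervalIntegrable_const
    · -- h_diff
      apply Filter.Eventually.of_forall
      intro θ _ x hx
      have hw : (x : ℂ) * e θ ∈ Metric.ball (0:ℂ) R := hmem x θ (hxR x hx)
      have hh : HasDerivAt h (deriv h ((x : ℂ) * e θ)) ((x : ℂ) * e θ) :=
        (hd.differentiableAt (Metric.isOpen_ball.mem_nhds hw)).hasDerivAt
      have hinner : HasDerivAt (fun t : ℂ => t * e θ) (e θ) (x : ℂ) := by
        simpa using (hasDerivAt_id (x : ℂ)).mul_const (e θ)
      have hcompC : HasDerivAt (fun t : ℂ => h (t * e θ))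
          (deriv h ((x : ℂ) * e θ) * e θ) (x : ℂ) := by
        have := HasDerivAt.comp (x : ℂ) hh hinner
        exact this
      have hφ : HasDerivAt (fun t : ℝ => h ((t : ℂ) * e θ))
          (deriv h ((x : ℂ) * e θ) * e θ) x := hcompC.comp_ofReal
      exact hasDerivAt_log_norm hφ (hnz _ hw)
  -- A is constant on Icc 0 r
  have hcontA : ContinuousOn A (Set.Icc 0 r) :=
    fun x hx => ((hAderiv x hx).continuousAt.continuousWithinAt)
  have hconst := constant_of_has_deriv_right_zero hcontA
    (fun x hx => ((hAderiv x ⟨hx.1, le_of_lt hx.2⟩).hasDerivWithinAt))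
  have hAr : A r = A 0 := hconst r ⟨le_of_lt hr0, le_refl r⟩
  have hA0 : A 0 = 2 * Real.pi * Real.log ‖h 0‖ := by
    rw [hA]
    simp only [hF]
    have : ∀ θ : ℝ, Real.log ‖h (((0:ℝ) : ℂ) * e θ)‖ = Real.log ‖h 0‖ := by
      intro θ; norm_num
    rw [intervalIntegral.integral_congr (fun θ _ => this θ)]
    rw [intervalIntegral.integral_const, smul_eq_mul]
    ring
  calc ∫ θ in (0:ℝ)..(2 * Real.pi), Real.log ‖h ((r : ℂ) * Complex.exp ((θ : ℂ) * Complex.I))‖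
      = A r := rfl
    _ = A 0 := hAr
    _ = 2 * Real.pi * Real.log ‖h 0‖ := hA0

lemma norm_circle_pt (r θ : ℝ) (hr : 0 ≤ r) : ‖(r : ℂ) * Complex.exp ((θ : ℂ) * Complex.I)‖ = r := by
  rw [norm_mul, Complex.norm_real, Real.norm_eq_abs, _root_.abs_of_nonneg hr,
    Complex.norm_exp_ofReal_mul_I, mul_one]

-- L5 : linear factor centered outside the circle
lemma integral_log_norm_sub_outside {c : ℂ} {r : ℝ} (hr0 : 0 < r) (hrc : r < ‖c‖) :
    (∫ θ in (0:ℝ)..(2 * Real.pi),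
        Real.log ‖(r : ℂ) * Complex.exp ((θ : ℂ) * Complex.I) - c‖)
      = 2 * Real.pi * Real.log ‖c‖ := by
  have h := meanvalue_log_norm (h := fun z => z - c) (R := ‖c‖)
    (differentiable_id.sub_const c).differentiableOn
    (fun z hz => by
      rw [Metric.mem_ball, dist_zero_right] at hz
      exact sub_ne_zero.mpr (fun hzc => absurd hz (by rw [hzc]; exact lt_irrefl _)))
    hr0 hrc
  simpa using h

-- L6 : linear factor with zero strictly inside the circle
lemma integral_log_norm_sub_inside {a : ℂ} {r : ℝ} (hr0 : 0 < r) (ha0 : a ≠ 0)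
    (har : ‖a‖ < r) :
    (∫ θ in (0:ℝ)..(2 * Real.pi),
        Real.log ‖(r : ℂ) * Complex.exp ((θ : ℂ) * Complex.I) - a‖)
      = 2 * Real.pi * Real.log r := by
  have hapos : 0 < ‖a‖ := norm_pos_iff.mpr ha0
  have hrne : (r : ℂ) ≠ 0 := Complex.ofReal_ne_zero.mpr hr0.ne'
  have hane : (starRingEnd ℂ a) ≠ 0 := by simpa using ha0
  set c : ℂ := ((r : ℂ) ^ 2) / (starRingEnd ℂ a) with hc
  have hcnorm : ‖c‖ = r ^ 2 / ‖a‖ := by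
    rw [hc, norm_div, RCLike.norm_conj, norm_pow, Complex.norm_real]
    norm_num [_root_.abs_of_pos hr0]
  have hrc : r < ‖c‖ := by
    rw [hcnorm, lt_div_iff₀ hapos]
    calc r * ‖a‖ < r * r := mul_lt_mul_of_pos_left har hr0
      _ = r ^ 2 := by ring
  have hpt : ∀ θ : ℝ, Real.log ‖(r : ℂ) * Complex.exp ((θ : ℂ) * Complex.I) - a‖
      = Real.log (‖a‖ / r)
        + Real.log ‖(r : ℂ) * Complex.exp ((θ : ℂ) * Complex.I) - c‖ := by
    intro θ
    set w : ℂ := Complex.exp ((θ : ℂ) * Complex.I) with hw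
    have hwnorm : ‖w‖ = 1 := Complex.norm_exp_ofReal_mul_I θ
    have hwc2 : (starRingEnd ℂ) w * w = 1 := by
      rw [mul_comm, Complex.mul_conj]
      norm_cast
      rw [← Complex.sq_norm, hwnorm]; norm_num
    have hrwnorm : ‖(r:ℂ) * w‖ = r := norm_circle_pt r θ hr0.le
    have hne2 : (r:ℂ) * w - c ≠ 0 := by
      refine sub_ne_zero.mpr (fun hq => ?_)
      rw [← hq, hrwnorm] at hrc
      exact lt_irrefl _ hrc
    have h1 : (starRingEnd ℂ) ((r:ℂ) * w - a) * w = ((starRingEnd ℂ a) / r) * (c - (r:ℂ)*w) := by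
      have lhs : (starRingEnd ℂ) ((r:ℂ) * w - a) * w = (r:ℂ) - (starRingEnd ℂ a) * w := by
        rw [map_sub, map_mul, Complex.conj_ofReal]
        calc ((r:ℂ) * (starRingEnd ℂ) w - (starRingEnd ℂ) a) * w
            = (r:ℂ) * ((starRingEnd ℂ) w * w) - (starRingEnd ℂ) a * w := by ring
          _ = (r:ℂ) - (starRingEnd ℂ) a * w := by rw [hwc2, mul_one]
      have rhs : ((starRingEnd ℂ a) / r) * (c - (r:ℂ)*w) = (r:ℂ) - (starRingEnd ℂ a) * w := by
        rw [hc]; field_simp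
      rw [lhs, rhs]
    have hkey : ‖(r:ℂ) * w - a‖ = (‖a‖ / r) * ‖(r:ℂ) * w - c‖ := by
      have h2 : ‖(starRingEnd ℂ) ((r:ℂ) * w - a) * w‖ = ‖(r:ℂ)*w - a‖ := by
        rw [norm_mul, RCLike.norm_conj, hwnorm, mul_one]
      rw [← h2, h1, norm_mul, norm_div, RCLike.norm_conj, norm_sub_rev,
        Complex.norm_real, Real.norm_eq_abs, _root_.abs_of_pos hr0]
    rw [hkey, Real.log_mul (by positivity) (norm_ne_zero_iff.mpr hne2)]
  rw [intervalIntegral.integral_congr (fun θ _ => hpt θ)]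
  have hcont2 : Continuous (fun θ : ℝ =>
      Real.log ‖(r : ℂ) * Complex.exp ((θ : ℂ) * Complex.I) - c‖) := by
    have h1 : Continuous (fun θ : ℝ => (r : ℂ) * Complex.exp ((θ : ℂ) * Complex.I) - c) := by
      fun_prop
    refine (h1.norm).log (fun θ => norm_ne_zero_iff.mpr (sub_ne_zero.mpr fun hq => ?_))
    have := norm_circle_pt r θ hr0.le
    rw [hq] at this
    rw [← this] at hrc
    exact lt_irrefl _ hrc
  rw [intervalIntegral.integral_add intervalIntegrable_const (hcont2.intervalIntegrable _ _)]
  rw [integral_log_norm_sub_outside hr0 hrc, intervalIntegral.integral_const, smul_eq_mul,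
    hcnorm, Real.log_div (ne_of_gt hapos) hr0.ne', Real.log_div (by positivity) (ne_of_gt hapos),
    Real.log_pow]
  push_cast
  ring

-- L1 : finiteness of zeros in a compact subdisc
lemma finite_zeros {g : ℂ → ℂ} (hg : DifferentiableOn ℂ g (Metric.ball 0 1)) {z₀ : ℂ}
    (hz₀ : z₀ ∈ Metric.ball (0:ℂ) 1) (hgz₀ : g z₀ ≠ 0) {ρ : ℝ} (hρ : ρ < 1) :
    {z ∈ Metric.closedBall (0:ℂ) ρ | g z = 0}.Finite := by
  have han : AnalyticOnNhd ℂ g (Metric.ball 0 1) := hg.analyticOnNhd Metric.isOpen_ball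
  have hpre : IsPreconnected (Metric.ball (0:ℂ) 1) := (convex_ball _ _).isPreconnected
  have hK : Metric.closedBall (0:ℂ) ρ ⊆ Metric.ball 0 1 := Metric.closedBall_subset_ball hρ
  have hiso : ∀ a ∈ Metric.ball (0:ℂ) 1, ∀ᶠ z in nhdsWithin a {a}ᶜ, g z ≠ 0 := by
    intro a ha
    rcases (han a ha).eventually_eq_zero_or_eventually_ne_zero with h | h
    · exfalso
      have hfreq : ∃ᶠ z in nhdsWithin a {a}ᶜ, g z = 0 :=
        ((h.filter_mono nhdsWithin_le_nhds).frequently)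
      have := han.eqOn_zero_of_preconnected_of_frequently_eq_zero hpre ha hfreq
      exact hgz₀ (this hz₀)
    · exact h
  -- choose neighbourhoods
  have hU : ∀ (a : ℂ) (_ : a ∈ Metric.closedBall (0:ℂ) ρ),
      ∃ U ∈ nhds a, ∀ z ∈ U, z ≠ a → g z ≠ 0 := by
    intro a ha
    have := hiso a (hK ha)
    rw [eventually_nhdsWithin_iff] at this
    obtain ⟨U, hU, hUn, haU⟩ := _root_.eventually_nhds_iff.mp this
    exact ⟨U, hUn.mem_nhds haU, fun z hz hza => hU z hz hza⟩
  classical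
  choose U hUn hUz using hU
  obtain ⟨t, ht⟩ := (isCompact_closedBall (0:ℂ) ρ).elim_nhds_subcover' U hUn
  apply Set.Finite.subset (t.finite_toSet.image Subtype.val)
  intro z hz
  obtain ⟨hzK, hz0⟩ := hz
  obtain ⟨a, ha, haz⟩ := Set.mem_iUnion₂.mp (ht hzK)
  by_cases hza : z = (a : ℂ)
  · exact ⟨a, ha, hza.symm⟩
  · exact absurd hz0 (hUz a a.2 z haz hza)

-- L2 : extracting the full power of a zero
lemma factor_pow {g : ℂ → ℂ} (hg : DifferentiableOn ℂ g (Metric.ball 0 1)) {a : ℂ}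
    (ha : a ∈ Metric.ball (0:ℂ) 1) (hne : ¬ (∀ᶠ z in nhds a, g z = 0)) :
    ∃ (n : ℕ) (h : ℂ → ℂ), DifferentiableOn ℂ h (Metric.ball 0 1) ∧ h a ≠ 0 ∧
      ∀ z ∈ Metric.ball (0:ℂ) 1, g z = (z - a) ^ n * h z := by
  have hA : AnalyticAt ℂ g a := (hg.analyticOnNhd Metric.isOpen_ball) a ha
  obtain ⟨n, h₀, h₀an, h₀ne, heq⟩ := (hA.exists_eventuallyEq_pow_smul_nonzero_iff).mpr hne
  classical
  set h : ℂ → ℂ := fun z => if z = a then h₀ a else g z / (z - a) ^ n with hdef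
  have hloc : h =ᶠ[nhds a] h₀ := by
    filter_upwards [heq] with z hz
    by_cases hza : z = a
    · rw [hdef]; simp [hza]
    · rw [hdef]
      simp only [if_neg hza]
      rw [hz, smul_eq_mul]
      field_simp [pow_ne_zero n (sub_ne_zero.mpr hza)]
  refine ⟨n, h, ?_, ?_, ?_⟩
  · intro z hz
    by_cases hza : z = a
    · subst hza
      exact (h₀an.differentiableAt.congr_of_eventuallyEq hloc).differentiableWithinAt
    · have hd : DifferentiableAt ℂ (fun w => g w / (w - a) ^ n) z :=
        (hg.differentiableAt (Metric.isOpen_ball.mem_nhds hz)).div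
          (((differentiable_id.sub_const a).pow n).differentiableAt)
          (pow_ne_zero _ (sub_ne_zero.mpr hza))
      have hev : h =ᶠ[nhds z] (fun w => g w / (w - a) ^ n) := by
        have hopen : IsOpen {w : ℂ | w ≠ a} := isOpen_ne
        filter_upwards [hopen.mem_nhds hza] with w hw
        rw [hdef]; simp [if_neg hw]
      exact (hd.congr_of_eventuallyEq hev).differentiableWithinAt
  · rw [hdef]; simpa using h₀ne
  · intro z _
    by_cases hza : z = a
    · rw [hza]
      have hval : g a = (0:ℂ) ^ n * h₀ a := by
        have := heq.self_of_nhds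
        simpa using this
      rw [hval, hdef]
      simp
    · rw [hdef]
      simp only [if_neg hza]
      field_simp [pow_ne_zero n (sub_ne_zero.mpr hza)]

-- L3 : global factorization over the zeros in a closed subdisc
lemma factor_list {ρ : ℝ} (hρ0 : 0 < ρ) (hρ1 : ρ < 1) :
    ∀ (N : ℕ) (g : ℂ → ℂ), DifferentiableOn ℂ g (Metric.ball 0 1) →
    (∃ z₀ ∈ Metric.ball (0:ℂ) 1, g z₀ ≠ 0) →
    ({z ∈ Metric.closedBall (0:ℂ) ρ | g z = 0}).ncard ≤ N →
    ∃ (l : List ℂ) (h : ℂ → ℂ), (∀ a ∈ l, a ∈ Metric.closedBall (0:ℂ) ρ) ∧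
      DifferentiableOn ℂ h (Metric.ball 0 1) ∧ (∀ z ∈ Metric.closedBall (0:ℂ) ρ, h z ≠ 0) ∧
      ∀ z ∈ Metric.ball (0:ℂ) 1, g z = (l.map (fun a => z - a)).prod * h z := by
  intro N
  induction N with
  | zero =>
    intro g hg hnz hcard
    obtain ⟨z₀, hz₀, hgz₀⟩ := hnz
    have hfin : {z ∈ Metric.closedBall (0:ℂ) ρ | g z = 0}.Finite :=
      finite_zeros hg hz₀ hgz₀ hρ1
    have hempty : {z ∈ Metric.closedBall (0:ℂ) ρ | g z = 0} = ∅ := by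
      rw [← Set.ncard_eq_zero hfin]
      omega
    refine ⟨[], g, by simp, hg, ?_, by simp⟩
    intro z hz
    by_contra h0
    have : z ∈ ({z ∈ Metric.closedBall (0:ℂ) ρ | g z = 0}) := ⟨hz, not_not.mp (by simpa using h0)⟩
    rw [hempty] at this
    exact this
  | succ N ih =>
    intro g hg hnz hcard
    obtain ⟨z₀, hz₀, hgz₀⟩ := hnz
    have hfin : {z ∈ Metric.closedBall (0:ℂ) ρ | g z = 0}.Finite :=
      finite_zeros hg hz₀ hgz₀ hρ1
    by_cases hempty : {z ∈ Metric.closedBall (0:ℂ) ρ | g z = 0} = ∅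
    · refine ⟨[], g, by simp, hg, ?_, by simp⟩
      intro z hz
      by_contra h0
      have : z ∈ ({z ∈ Metric.closedBall (0:ℂ) ρ | g z = 0}) := ⟨hz, not_not.mp (by simpa using h0)⟩
      rw [hempty] at this
      exact this
    · obtain ⟨a, ha⟩ := Set.nonempty_iff_ne_empty.mpr hempty
      obtain ⟨haK, hga⟩ := ha
      have haB : a ∈ Metric.ball (0:ℂ) 1 := Metric.closedBall_subset_ball hρ1 haK
      have hpre : IsPreconnected (Metric.ball (0:ℂ) 1) := (convex_ball _ _).isPreconnected
      have hnev : ¬ (∀ᶠ z in nhds a, g z = 0) := by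
        intro hev
        have hfreq : ∃ᶠ z in nhdsWithin a {a}ᶜ, g z = 0 :=
          ((hev.filter_mono nhdsWithin_le_nhds).frequently)
        have := (hg.analyticOnNhd Metric.isOpen_ball).eqOn_zero_of_preconnected_of_frequently_eq_zero
          hpre haB hfreq
        exact hgz₀ (this hz₀)
      obtain ⟨n, h₁, h₁d, h₁a, h₁eq⟩ := factor_pow hg haB hnev
      have hsub : {z ∈ Metric.closedBall (0:ℂ) ρ | h₁ z = 0}
          ⊆ {z ∈ Metric.closedBall (0:ℂ) ρ | g z = 0} \ {a} := by
        intro z hz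
        obtain ⟨hzK, hz0⟩ := hz
        refine ⟨⟨hzK, ?_⟩, ?_⟩
        · rw [h₁eq z (Metric.closedBall_subset_ball hρ1 hzK), hz0, mul_zero]
        · intro hza
          rw [Set.mem_singleton_iff] at hza
          rw [hza] at hz0
          exact h₁a hz0
      have hcard' : ({z ∈ Metric.closedBall (0:ℂ) ρ | h₁ z = 0}).ncard ≤ N := by
        have h1 : ({z ∈ Metric.closedBall (0:ℂ) ρ | g z = 0} \ {a}).ncard
            = ({z ∈ Metric.closedBall (0:ℂ) ρ | g z = 0}).ncard - 1 :=
          Set.ncard_diff_singleton_of_mem ⟨haK, hga⟩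
        have h2 := Set.ncard_le_ncard hsub hfin.diff
        omega
      obtain ⟨l₁, h, hl₁K, hd, hne, heq⟩ := ih h₁ h₁d ⟨a, haB, h₁a⟩ hcard'
      refine ⟨List.replicate n a ++ l₁, h, ?_, hd, hne, ?_⟩
      · intro b hb
        rcases List.mem_append.mp hb with hb | hb
        · rw [List.eq_of_mem_replicate hb]; exact haK
        · exact hl₁K b hb
      · intro z hz
        rw [List.map_append, List.prod_append, List.map_replicate, List.prod_replicate,
          h₁eq z hz, heq z hz]
        ring

lemma log_norm_list_prod (w : ℂ) : ∀ (l : List ℂ), (∀ a ∈ l, w - a ≠ 0) →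
    Real.log ‖(l.map (fun a => w - a)).prod‖ = (l.map (fun a => Real.log ‖w - a‖)).sum := by
  intro l
  induction l with
  | nil => simp
  | cons a l ih =>
    intro hl
    have ha : w - a ≠ 0 := hl a (List.mem_cons_self)
    have hrest : ∀ b ∈ l, w - b ≠ 0 := fun b hb => hl b (List.mem_cons_of_mem a hb)
    have hprodne : (l.map (fun b => w - b)).prod ≠ 0 := by
      apply List.prod_ne_zero
      intro h0
      obtain ⟨b, hb, hb0⟩ := List.mem_map.mp h0
      exact (hrest b hb) hb0
    simp only [List.map_cons, List.prod_cons, List.sum_cons]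
    rw [norm_mul, Real.log_mul (norm_ne_zero_iff.mpr ha) (norm_ne_zero_iff.mpr hprodne),
      ih hrest]

lemma cont_log_sum {r : ℝ} (hr0 : 0 < r) : ∀ (l : List ℂ), (∀ a ∈ l, ‖a‖ < r) →
    Continuous (fun θ : ℝ =>
      (l.map (fun a => Real.log ‖(r : ℂ) * Complex.exp ((θ : ℂ) * Complex.I) - a‖)).sum) := by
  intro l
  induction l with
  | nil => simp; exact continuous_const
  | cons a l ih =>
    intro hl
    simp only [List.map_cons, List.sum_cons]
    have h1 : Continuous (fun θ : ℝ =>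
        Real.log ‖(r : ℂ) * Complex.exp ((θ : ℂ) * Complex.I) - a‖) := by
      have hc : Continuous (fun θ : ℝ => (r : ℂ) * Complex.exp ((θ : ℂ) * Complex.I) - a) := by
        fun_prop
      refine (hc.norm).log (fun θ => norm_ne_zero_iff.mpr (sub_ne_zero.mpr fun hq => ?_))
      have := norm_circle_pt r θ hr0.le
      rw [hq] at this
      rw [← this] at hl
      exact lt_irrefl _ (hl a (List.mem_cons_self))
    exact h1.add (ih (fun b hb => hl b (List.mem_cons_of_mem a hb)))

lemma integral_log_sum {r : ℝ} (hr0 : 0 < r) : ∀ (l : List ℂ),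
    (∀ a ∈ l, a ≠ 0 ∧ ‖a‖ < r) →
    (∫ θ in (0:ℝ)..(2 * Real.pi),
      (l.map (fun a => Real.log ‖(r : ℂ) * Complex.exp ((θ : ℂ) * Complex.I) - a‖)).sum)
      = (l.length : ℝ) * (2 * Real.pi * Real.log r) := by
  intro l
  induction l with
  | nil => simp
  | cons a l ih =>
    intro hl
    obtain ⟨ha0, har⟩ := hl a (List.mem_cons_self)
    have hrest : ∀ b ∈ l, b ≠ 0 ∧ ‖b‖ < r := fun b hb => hl b (List.mem_cons_of_mem a hb)
    simp only [List.map_cons, List.sum_cons]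
    have h1 : Continuous (fun θ : ℝ =>
        Real.log ‖(r : ℂ) * Complex.exp ((θ : ℂ) * Complex.I) - a‖) := by
      have hc : Continuous (fun θ : ℝ => (r : ℂ) * Complex.exp ((θ : ℂ) * Complex.I) - a) := by
        fun_prop
      refine (hc.norm).log (fun θ => norm_ne_zero_iff.mpr (sub_ne_zero.mpr fun hq => ?_))
      have := norm_circle_pt r θ hr0.le
      rw [hq] at this
      rw [← this] at har
      exact lt_irrefl _ har
    rw [intervalIntegral.integral_add (h1.intervalIntegrable _ _)
      ((cont_log_sum hr0 l (fun b hb => (hrest b hb).2)).intervalIntegrable _ _)]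
    rw [integral_log_norm_sub_inside hr0 ha0 har, ih hrest]
    simp only [List.length_cons]
    push_cast
    ring

-- L7 : Jensen's inequality
lemma jensen_ineq {g : ℂ → ℂ} (hg : DifferentiableOn ℂ g (Metric.ball 0 1)) (hg0 : g 0 ≠ 0)
    {r : ℝ} (hr0 : 0 < r) (hr1 : r < 1)
    (hsph : ∀ z : ℂ, ‖z‖ = r → g z ≠ 0) :
    2 * Real.pi * Real.log ‖g 0‖
      ≤ ∫ θ in (0:ℝ)..(2 * Real.pi),
          Real.log ‖g ((r : ℂ) * Complex.exp ((θ : ℂ) * Complex.I))‖ := by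
  have h0B : (0:ℂ) ∈ Metric.ball (0:ℂ) 1 := Metric.mem_ball_self one_pos
  obtain ⟨l, h, hlK, hd, hne, heq⟩ := factor_list hr0 hr1
    ({z ∈ Metric.closedBall (0:ℂ) r | g z = 0}).ncard g hg ⟨0, h0B, hg0⟩ le_rfl
  -- each a in l is nonzero and strictly inside
  have hball : ∀ a ∈ l, a ∈ Metric.ball (0:ℂ) 1 := by
    intro a ha
    exact Metric.closedBall_subset_ball hr1 (hlK a ha)
  have hprops : ∀ a ∈ l, a ≠ 0 ∧ ‖a‖ < r := by
    intro a ha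
    constructor
    · intro ha0
      apply hg0
      rw [heq 0 h0B]
      have : (0:ℂ) ∈ l.map (fun b => (0:ℂ) - b) := by
        rw [List.mem_map]
        exact ⟨a, ha, by rw [ha0]; ring⟩
      rw [List.prod_eq_zero this, zero_mul]
    · have hle : ‖a‖ ≤ r := by
        have := hlK a ha
        rwa [Metric.mem_closedBall, dist_zero_right] at this
      rcases lt_or_eq_of_le hle with h' | h'
      · exact h'
      · exfalso
        apply hsph a h'
        rw [heq a (hball a ha)]
        have : (0:ℂ) ∈ l.map (fun b => a - b) := by
          rw [List.mem_map]
          exact ⟨a, ha, by ring⟩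
        rw [List.prod_eq_zero this, zero_mul]
  -- find R' > r on which h does not vanish
  have hh0 : h 0 ≠ 0 := hne 0 (Metric.mem_closedBall_self hr0.le)
  set ρ' : ℝ := (r + 1) / 2 with hρ'
  have hrρ' : r < ρ' := by rw [hρ']; linarith
  have hρ'1 : ρ' < 1 := by rw [hρ']; linarith
  have hKfin : {z ∈ Metric.closedBall (0:ℂ) ρ' | h z = 0}.Finite :=
    finite_zeros hd h0B hh0 hρ'1
  classical
  set Fs : Finset ℝ := hKfin.toFinset.image (fun z => ‖z‖) ∪ {ρ'} with hFs
  have hFsne : Fs.Nonempty := ⟨ρ', by rw [hFs]; simp⟩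
  set m : ℝ := Fs.min' hFsne with hm
  have hrm : r < m := by
    rw [hm, Finset.lt_min'_iff]
    intro x hx
    rw [hFs, Finset.mem_union] at hx
    rcases hx with hx | hx
    · obtain ⟨z, hz, hzx⟩ := Finset.mem_image.mp hx
      rw [Set.Finite.mem_toFinset] at hz
      obtain ⟨hzK, hz0⟩ := hz
      rw [← hzx]
      by_contra hle
      push_neg at hle
      exact hne z (Metric.mem_closedBall.mpr (by rwa [dist_zero_right])) hz0
    · rw [Finset.mem_singleton] at hx
      rw [hx]; exact hrρ'
  have hmρ' : m ≤ ρ' := Finset.min'_le _ _ (by rw [hFs]; simp)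
  set R' : ℝ := (r + m) / 2 with hR'
  have hrR' : r < R' := by rw [hR']; linarith
  have hR'm : R' < m := by rw [hR']; linarith
  have hR'1 : R' < 1 := by
    calc R' < m := hR'm
      _ ≤ ρ' := hmρ'
      _ < 1 := hρ'1
  have hsubR' : Metric.ball (0:ℂ) R' ⊆ Metric.ball 0 1 :=
    Metric.ball_subset_ball hR'1.le
  have hnzR' : ∀ z ∈ Metric.ball (0:ℂ) R', h z ≠ 0 := by
    intro z hz hz0
    rw [Metric.mem_ball, dist_zero_right] at hz
    have hzK : z ∈ Metric.closedBall (0:ℂ) ρ' :=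
      Metric.mem_closedBall.mpr (by rw [dist_zero_right]; linarith)
    have : ‖z‖ ∈ Fs := by
      rw [hFs, Finset.mem_union]
      left
      exact Finset.mem_image.mpr ⟨z, Set.Finite.mem_toFinset _ |>.mpr ⟨hzK, hz0⟩, rfl⟩
    have := Finset.min'_le _ _ this
    rw [← hm] at this
    linarith
  have hmv := meanvalue_log_norm (h := h) (R := R') (hd.mono hsubR') hnzR' hr0 hrR'
  -- pointwise splitting on the circle
  have hcirc : ∀ θ : ℝ, ((r:ℂ) * Complex.exp ((θ : ℂ) * Complex.I)) ∈ Metric.ball (0:ℂ) 1 := by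
    intro θ
    rw [Metric.mem_ball, dist_zero_right, norm_circle_pt r θ hr0.le]
    exact hr1
  have hwsub : ∀ θ : ℝ, ∀ a ∈ l, (r:ℂ) * Complex.exp ((θ : ℂ) * Complex.I) - a ≠ 0 := by
    intro θ a ha
    refine sub_ne_zero.mpr (fun hq => ?_)
    have := norm_circle_pt r θ hr0.le
    rw [hq] at this
    exact absurd this.symm (ne_of_lt (hprops a ha).2).symm
  have hhw : ∀ θ : ℝ, h ((r:ℂ) * Complex.exp ((θ : ℂ) * Complex.I)) ≠ 0 := by
    intro θ
    apply hne
    rw [Metric.mem_closedBall, dist_zero_right, norm_circle_pt r θ hr0.le]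
  have hpt : ∀ θ : ℝ, Real.log ‖g ((r:ℂ) * Complex.exp ((θ : ℂ) * Complex.I))‖
      = (l.map (fun a => Real.log ‖(r:ℂ) * Complex.exp ((θ : ℂ) * Complex.I) - a‖)).sum
        + Real.log ‖h ((r:ℂ) * Complex.exp ((θ : ℂ) * Complex.I))‖ := by
    intro θ
    set w : ℂ := (r:ℂ) * Complex.exp ((θ : ℂ) * Complex.I) with hwdef
    have hprodne : (l.map (fun a => w - a)).prod ≠ 0 := by
      apply List.prod_ne_zero
      intro h0
      obtain ⟨b, hb, hb0⟩ := List.mem_map.mp h0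
      exact (hwsub θ b hb) hb0
    rw [heq w (hcirc θ), norm_mul,
      Real.log_mul (norm_ne_zero_iff.mpr hprodne) (norm_ne_zero_iff.mpr (hhw θ)),
      log_norm_list_prod w l (hwsub θ)]
  -- continuity of the h-term
  have hcont_h : Continuous (fun θ : ℝ =>
      Real.log ‖h ((r:ℂ) * Complex.exp ((θ : ℂ) * Complex.I))‖) := by
    have hc : Continuous (fun θ : ℝ => (r:ℂ) * Complex.exp ((θ : ℂ) * Complex.I)) := by fun_prop
    have h2 : Continuous (fun θ : ℝ => h ((r:ℂ) * Complex.exp ((θ : ℂ) * Complex.I))) :=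
      hd.continuousOn.comp_continuous hc hcirc
    exact (h2.norm).log (fun θ => norm_ne_zero_iff.mpr (hhw θ))
  -- compute the integral
  have hint : (∫ θ in (0:ℝ)..(2 * Real.pi),
      Real.log ‖g ((r:ℂ) * Complex.exp ((θ : ℂ) * Complex.I))‖)
      = (l.length : ℝ) * (2 * Real.pi * Real.log r) + 2 * Real.pi * Real.log ‖h 0‖ := by
    rw [intervalIntegral.integral_congr (fun θ _ => hpt θ)]
    rw [intervalIntegral.integral_add
      ((cont_log_sum hr0 l (fun b hb => (hprops b hb).2)).intervalIntegrable _ _)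
      (hcont_h.intervalIntegrable _ _)]
    rw [integral_log_sum hr0 l hprops, hmv]
  rw [hint]
  -- lower bound for the left-hand side
  have hg0val : Real.log ‖g 0‖
      = (l.map (fun a => Real.log ‖a‖)).sum + Real.log ‖h 0‖ := by
    have h0sub : ∀ a ∈ l, (0:ℂ) - a ≠ 0 := by
      intro a ha
      simpa using (hprops a ha).1
    have hprodne : (l.map (fun a => (0:ℂ) - a)).prod ≠ 0 := by
      apply List.prod_ne_zero
      intro h0
      obtain ⟨b, hb, hb0⟩ := List.mem_map.mp h0
      exact (h0sub b hb) hb0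
    rw [heq 0 h0B, norm_mul,
      Real.log_mul (norm_ne_zero_iff.mpr hprodne) (norm_ne_zero_iff.mpr hh0),
      log_norm_list_prod 0 l h0sub]
    congr 2
    apply List.map_congr_left
    intro a _
    rw [zero_sub, norm_neg]
  rw [hg0val]
  have hsum_le : (l.map (fun a => Real.log ‖a‖)).sum ≤ (l.length : ℝ) * Real.log r := by
    have h1 : (l.map (fun a => Real.log ‖a‖)).sum ≤ (l.map (fun _ => Real.log r)).sum := by
      apply List.sum_le_sum
      intro a ha
      exact Real.log_le_log (norm_pos_iff.mpr (hprops a ha).1) (hprops a ha).2.le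
    calc (l.map (fun a => Real.log ‖a‖)).sum ≤ (l.map (fun _ => Real.log r)).sum := h1
      _ = (l.length : ℝ) * Real.log r := by
          rw [List.map_const', List.sum_replicate, nsmul_eq_mul]
  have hpi : (0:ℝ) < 2 * Real.pi := by positivity
  nlinarith [hsum_le, hpi]

-- core contradiction lemma
lemma core_contradiction {g : ℂ → ℂ} {M' : ℝ}
    (hg : DifferentiableOn ℂ g (Metric.ball 0 1)) (hg0 : g 0 ≠ 0)
    (hbd : ∀ z : ℂ, 1/2 ≤ ‖z‖ → ‖z‖ < 1 → ‖g z‖ ≤ M')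
    {E : Set ℝ}
    (hEt : ∀ θ ∈ E, Filter.Tendsto (fun ρ : ℝ => g ((ρ:ℂ) * Complex.exp ((θ:ℂ) * Complex.I)))
      (nhdsWithin 1 (Set.Iio 1)) (nhds 0))
    (hpos : 0 < volume E) (hEsub : E ⊆ Set.Ico 0 (2 * Real.pi)) : False := by
  classical
  -- select good radii
  have hsel : ∀ m : ℕ, ∃ t : ℝ,
      (max (1/2) (1 - 1/((m:ℝ)+1)) < t ∧ t < 1) ∧ ∀ z : ℂ, ‖z‖ = t → g z ≠ 0 := by
    intro m
    set a := max (1/2) (1 - 1/((m:ℝ)+1)) with hadef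
    have ha1 : a < 1 := by
      apply max_lt (by norm_num)
      have : 0 < 1/((m:ℝ)+1) := by positivity
      linarith
    set b := (a+1)/2 with hbdef
    have hab : a < b := by rw [hbdef]; linarith
    have hb1 : b < 1 := by rw [hbdef]; linarith
    have hfin := finite_zeros hg (Metric.mem_ball_self one_pos) hg0 hb1
    have hbad : ((fun z : ℂ => ‖z‖) '' {z ∈ Metric.closedBall (0:ℂ) b | g z = 0}).Finite :=
      hfin.image _
    obtain ⟨t, ht⟩ := ((Set.Ioo_infinite hab).diff hbad).nonempty
    obtain ⟨⟨hta, htb⟩, htbad⟩ := ht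
    refine ⟨t, ⟨hta, lt_trans htb hb1⟩, ?_⟩
    intro z hz hz0
    apply htbad
    exact ⟨z, ⟨Metric.mem_closedBall.mpr (by rw [dist_zero_right, hz]; exact htb.le), hz0⟩, hz⟩
  choose u hu hsph using hsel
  have hu_half : ∀ m, 1/2 < u m := fun m => lt_of_le_of_lt (le_max_left _ _) (hu m).1
  have hu_pos : ∀ m, 0 < u m := fun m => lt_trans (by norm_num) (hu_half m)
  have hu_lt1 : ∀ m, u m < 1 := fun m => (hu m).2
  -- u m tends to 1 from below
  have htendu : Filter.Tendsto u Filter.atTop (nhdsWithin 1 (Set.Iio 1)) := by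
    apply tendsto_nhdsWithin_of_tendsto_nhds_of_eventually_within
    · have hlow : Filter.Tendsto (fun m : ℕ => 1 - 1/((m:ℝ)+1)) Filter.atTop (nhds 1) := by
        have := tendsto_one_div_add_atTop_nhds_zero_nat (𝕜 := ℝ)
        have h2 := Filter.Tendsto.const_sub (1:ℝ) this
        simpa using h2
      apply tendsto_of_tendsto_of_tendsto_of_le_of_le hlow tendsto_const_nhds
      · intro m
        exact le_of_lt (lt_of_le_of_lt (le_max_right _ _) (hu m).1)
      · intro m
        exact (hu_lt1 m).le
    · exact Filter.Eventually.of_forall (fun m => hu_lt1 m)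
  -- the circle points
  set w : ℕ → ℝ → ℂ := fun m θ => ((u m : ℝ) : ℂ) * Complex.exp ((θ:ℂ) * Complex.I) with hw
  have hwnorm : ∀ m θ, ‖w m θ‖ = u m := fun m θ => norm_circle_pt (u m) θ (hu_pos m).le
  have hgw_ne : ∀ m θ, g (w m θ) ≠ 0 := fun m θ => hsph m _ (hwnorm m θ)
  have hgw_pos : ∀ m θ, 0 < ‖g (w m θ)‖ := fun m θ => norm_pos_iff.mpr (hgw_ne m θ)
  have hM'pos : 0 < M' := lt_of_lt_of_le (hgw_pos 0 0)
    (hbd _ (by rw [hwnorm]; exact (hu_half 0).le) (by rw [hwnorm]; exact hu_lt1 0))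
  -- continuity in θ
  have hwcont : ∀ m, Continuous (fun θ : ℝ => Real.log ‖g (w m θ)‖) := by
    intro m
    have hc : Continuous (w m) := by rw [hw]; fun_prop
    have hmemball : ∀ θ, w m θ ∈ Metric.ball (0:ℂ) 1 := by
      intro θ
      rw [Metric.mem_ball, dist_zero_right, hwnorm]
      exact hu_lt1 m
    have h2 : Continuous (fun θ => g (w m θ)) := hg.continuousOn.comp_continuous hc hmemball
    exact (h2.norm).log (fun θ => (hgw_pos m θ).ne')
  -- Jensen lower bound
  set c : ℝ := 2 * Real.pi * Real.log ‖g 0‖ with hc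
  have hJ : ∀ m, c ≤ ∫ θ in (0:ℝ)..(2 * Real.pi), Real.log ‖g (w m θ)‖ :=
    fun m => jensen_ineq hg hg0 (hu_pos m) (hu_lt1 m) (hsph m)
  -- pointwise upper bound
  have hlog_le : ∀ m θ, Real.log ‖g (w m θ)‖ ≤ Real.log M' := by
    intro m θ
    apply Real.log_le_log (hgw_pos m θ)
    exact hbd _ (by rw [hwnorm]; exact (hu_half m).le) (by rw [hwnorm]; exact hu_lt1 m)
  -- the nonnegative functions v m
  set v : ℕ → ℝ → ℝ := fun m θ => Real.log M' - Real.log ‖g (w m θ)‖ with hv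
  have hvcont : ∀ m, Continuous (v m) := fun m => continuous_const.sub (hwcont m)
  have hvnonneg : ∀ m θ, 0 ≤ v m θ := fun m θ => sub_nonneg.mpr (hlog_le m θ)
  set B : ℝ := 2 * Real.pi * Real.log M' - c with hB
  have h2pi : (0:ℝ) ≤ 2 * Real.pi := by positivity
  have hIm : ∀ m, (∫ θ in Set.Ioc 0 (2 * Real.pi), v m θ) ≤ B := by
    intro m
    have h1 : (∫ θ in Set.Ioc 0 (2 * Real.pi), v m θ)
        = ∫ θ in (0:ℝ)..(2 * Real.pi), v m θ := (intervalIntegral.integral_of_le h2pi).symm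
    rw [h1, hv]
    rw [intervalIntegral.integral_sub intervalIntegrable_const
      ((hwcont m).intervalIntegrable _ _)]
    rw [intervalIntegral.integral_const, smul_eq_mul, sub_zero]
    have := hJ m
    rw [hB, hc]
    linarith
  -- pass to lintegral
  set μ' : Measure ℝ := volume.restrict (Set.Ioc 0 (2 * Real.pi)) with hμ'
  set V : ℕ → ℝ → ENNReal := fun m θ => ENNReal.ofReal (v m θ) with hV
  have hVmeas : ∀ m, Measurable (V m) :=
    fun m => ENNReal.measurable_ofReal.comp (hvcont m).measurable
  have hlin : ∀ m, (∫⁻ θ, V m θ ∂μ') ≤ ENNReal.ofReal B := by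
    intro m
    have hint : Integrable (v m) μ' := by
      rw [hμ']
      exact (hvcont m).integrableOn_Ioc
    have := ofReal_integral_eq_lintegral_ofReal hint
      (Filter.Eventually.of_forall (fun θ => hvnonneg m θ))
    rw [hV, ← this]
    apply ENNReal.ofReal_le_ofReal
    exact hIm m
  set W : ℝ → ENNReal := fun θ => Filter.liminf (fun m => V m θ) Filter.atTop with hW
  have hWmeas : Measurable W := Measurable.liminf hVmeas
  have hWlin : (∫⁻ θ, W θ ∂μ') ≤ ENNReal.ofReal B := by
    refine le_trans (lintegral_liminf_le hVmeas) ?_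
    exact liminf_le_of_frequently_le' (Filter.Frequently.of_forall hlin)
  have hWae : ∀ᵐ θ ∂μ', W θ < ⊤ :=
    ae_lt_top hWmeas (lt_of_le_of_lt hWlin ENNReal.ofReal_lt_top).ne
  -- on E, W = ⊤
  have hWtop : ∀ θ ∈ E, W θ = ⊤ := by
    intro θ hθ
    have hg0t : Filter.Tendsto (fun m => g (w m θ)) Filter.atTop (nhds 0) :=
      (hEt θ hθ).comp htendu
    have hnt : Filter.Tendsto (fun m => ‖g (w m θ)‖) Filter.atTop (nhdsWithin 0 (Set.Ioi 0)) := by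
      apply tendsto_nhdsWithin_of_tendsto_nhds_of_eventually_within
      · simpa using hg0t.norm
      · exact Filter.Eventually.of_forall (fun m => hgw_pos m θ)
    have hlogt : Filter.Tendsto (fun m => Real.log ‖g (w m θ)‖) Filter.atTop Filter.atBot :=
      Real.tendsto_log_nhdsGT_zero.comp hnt
    have hvt : Filter.Tendsto (fun m => v m θ) Filter.atTop Filter.atTop := by
      have hneg : Filter.Tendsto (fun m => -Real.log ‖g (w m θ)‖) Filter.atTop Filter.atTop :=
        Filter.tendsto_neg_atBot_atTop.comp hlogt
      have := Filter.tendsto_atTop_add_const_left Filter.atTop (Real.log M') hneg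
      apply this.congr
      intro m
      rw [hv]
      ring
    have hVt : Filter.Tendsto (fun m => V m θ) Filter.atTop (nhds ⊤) := by
      rw [hV]
      exact ENNReal.tendsto_ofReal_atTop.comp hvt
    rw [hW]
    exact hVt.liminf_eq
  -- measure contradiction
  have hset : {θ | W θ = ⊤} = W ⁻¹' {⊤} := rfl
  have hsetmeas : MeasurableSet {θ | W θ = ⊤} := hWmeas (measurableSet_singleton ⊤)
  have hμtop : μ' {θ | W θ = ⊤} = 0 := by
    have : {θ | ¬ W θ < ⊤} = {θ | W θ = ⊤} := by
      ext θ
      simp [lt_top_iff_ne_top]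
    rw [← this]
    exact hWae
  have hvolEIoc : volume (E ∩ Set.Ioc 0 (2 * Real.pi)) = 0 := by
    have hsub : E ∩ Set.Ioc 0 (2 * Real.pi) ⊆ {θ | W θ = ⊤} ∩ Set.Ioc 0 (2 * Real.pi) :=
      fun θ hθ => ⟨hWtop θ hθ.1, hθ.2⟩
    have : volume ({θ | W θ = ⊤} ∩ Set.Ioc 0 (2 * Real.pi)) = 0 := by
      rw [← Measure.restrict_apply hsetmeas]
      exact hμtop
    exact le_antisymm (le_trans (measure_mono hsub) this.le) zero_le
  have hEcover : E ⊆ (E ∩ Set.Ioc 0 (2 * Real.pi)) ∪ {0} := by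
    intro θ hθ
    by_cases hmem : θ ∈ Set.Ioc 0 (2 * Real.pi)
    · exact Or.inl ⟨hθ, hmem⟩
    · right
      have h1 := hEsub hθ
      rw [Set.mem_Ico] at h1
      rw [Set.mem_Ioc] at hmem
      push_neg at hmem
      rw [Set.mem_singleton_iff]
      rcases lt_or_eq_of_le h1.1 with h' | h'
      · exact absurd (hmem h') (not_lt.mpr h1.2.le)
      · exact h'.symm
  have : volume E = 0 := by
    have := measure_mono (μ := volume) hEcover
    have h2 := measure_union_le (μ := volume) (E ∩ Set.Ioc 0 (2 * Real.pi)) ({0} : Set ℝ)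
    rw [hvolEIoc, Real.volume_singleton, zero_add] at h2
    exact le_antisymm (le_trans this h2) zero_le
  rw [this] at hpos
  exact lt_irrefl _ hpos

/-- F. and M. Riesz / Privalov-type uniqueness theorem: a bounded analytic function on the unit
disc whose radial limits vanish on a set of angles of positive measure vanishes identically. -/
theorem riesz_uniqueness (f : ℂ → ℂ) (M : ℝ)
    (hf : DifferentiableOn ℂ f (Metric.ball (0 : ℂ) 1))
    (hbd : ∀ z ∈ Metric.ball (0 : ℂ) 1, ‖f z‖ < M)
    (E : Set ℝ)
    (hE : E = {θ ∈ Set.Ico (0 : ℝ) (2 * Real.pi) |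
      Filter.Tendsto (fun r : ℝ => f ((r : ℂ) * Complex.exp ((θ : ℂ) * Complex.I)))
        (nhdsWithin 1 (Set.Iio 1)) (nhds 0)})
    (hpos : 0 < MeasureTheory.volume E) :
    ∀ z ∈ Metric.ball (0 : ℂ) 1, f z = 0 := by
  intro z hz
  by_contra hfz
  -- f is not eventually zero at 0
  have h0B : (0:ℂ) ∈ Metric.ball (0:ℂ) 1 := Metric.mem_ball_self one_pos
  have hpre : IsPreconnected (Metric.ball (0:ℂ) 1) := (convex_ball _ _).isPreconnected
  have hnev : ¬ (∀ᶠ w in nhds 0, f w = 0) := by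
    intro hev
    have hfreq : ∃ᶠ w in nhdsWithin 0 {(0:ℂ)}ᶜ, f w = 0 :=
      ((hev.filter_mono nhdsWithin_le_nhds).frequently)
    have := (hf.analyticOnNhd Metric.isOpen_ball).eqOn_zero_of_preconnected_of_frequently_eq_zero
      hpre h0B hfreq
    exact hfz (this hz)
  obtain ⟨n, g, hgd, hg0, hfeq⟩ := factor_pow hf h0B hnev
  have hfeq' : ∀ w ∈ Metric.ball (0:ℂ) 1, f w = w ^ n * g w := by
    intro w hw
    have := hfeq w hw
    simpa using this
  -- bound for g on the outer annulus
  have hM0 : 0 < M := lt_of_le_of_lt (norm_nonneg (f 0)) (hbd 0 h0B)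
  set M' : ℝ := M * 2 ^ n with hM'
  have hgbd : ∀ z' : ℂ, 1/2 ≤ ‖z'‖ → ‖z'‖ < 1 → ‖g z'‖ ≤ M' := by
    intro z' hz1 hz2
    have hz'B : z' ∈ Metric.ball (0:ℂ) 1 := by rwa [Metric.mem_ball, dist_zero_right]
    have h1 : ‖f z'‖ = ‖z'‖ ^ n * ‖g z'‖ := by
      rw [hfeq' z' hz'B, norm_mul, norm_pow]
    have h2 : ((1:ℝ)/2) ^ n ≤ ‖z'‖ ^ n := pow_le_pow_left₀ (by norm_num) hz1 n
    have h3 : ‖g z'‖ * ((1:ℝ)/2) ^ n ≤ M := by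
      calc ‖g z'‖ * ((1:ℝ)/2) ^ n ≤ ‖g z'‖ * ‖z'‖ ^ n :=
            mul_le_mul_of_nonneg_left h2 (norm_nonneg _)
        _ = ‖f z'‖ := by rw [h1]; ring
        _ ≤ M := (hbd z' hz'B).le
    have h4 : ((1:ℝ)/2) ^ n * (2:ℝ) ^ n = 1 := by
      rw [← mul_pow]; norm_num
    calc ‖g z'‖ = (‖g z'‖ * ((1:ℝ)/2) ^ n) * (2:ℝ) ^ n := by
          rw [mul_assoc, h4, mul_one]
      _ ≤ M * (2:ℝ) ^ n := mul_le_mul_of_nonneg_right h3 (by positivity)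
  -- radial limits of g on E
  have hEt : ∀ θ ∈ E, Filter.Tendsto (fun ρ : ℝ => g ((ρ:ℂ) * Complex.exp ((θ:ℂ) * Complex.I)))
      (nhdsWithin 1 (Set.Iio 1)) (nhds 0) := by
    intro θ hθ
    rw [hE] at hθ
    obtain ⟨hIco, htf⟩ := hθ
    set eθ : ℂ := Complex.exp ((θ:ℂ) * Complex.I) with heθ
    have heθne : eθ ≠ 0 := Complex.exp_ne_zero _
    have hden : Filter.Tendsto (fun ρ : ℝ => ((ρ:ℂ) * eθ) ^ n)
        (nhdsWithin 1 (Set.Iio 1)) (nhds (eθ ^ n)) := by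
      have hcont : Continuous (fun ρ : ℝ => ((ρ:ℂ) * eθ) ^ n) := by fun_prop
      have := hcont.tendsto 1
      simp only [Complex.ofReal_one, one_mul] at this
      exact this.mono_left nhdsWithin_le_nhds
    have hdiv := Filter.Tendsto.div htf hden (pow_ne_zero n heθne)
    rw [zero_div] at hdiv
    apply hdiv.congr'
    have hIoo : Set.Ioo (1/2 : ℝ) 1 ∈ nhdsWithin (1:ℝ) (Set.Iio 1) := by
      rw [show Set.Ioo (1/2 : ℝ) 1 = Set.Ioi (1/2 : ℝ) ∩ Set.Iio 1 from rfl]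
      exact Filter.inter_mem (mem_nhdsWithin_of_mem_nhds (Ioi_mem_nhds (by norm_num)))
        self_mem_nhdsWithin
    filter_upwards [hIoo] with ρ hρ
    obtain ⟨hρ1, hρ2⟩ := hρ
    have hρpos : (0:ℝ) < ρ := by linarith
    have hmem : (ρ:ℂ) * eθ ∈ Metric.ball (0:ℂ) 1 := by
      rw [Metric.mem_ball, dist_zero_right, heθ, norm_circle_pt ρ θ hρpos.le]
      exact hρ2
    have hne : ((ρ:ℂ) * eθ) ^ n ≠ 0 :=
      pow_ne_zero n (mul_ne_zero (Complex.ofReal_ne_zero.mpr hρpos.ne') heθne)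
    show f ((ρ:ℂ) * eθ) / ((ρ:ℂ) * eθ) ^ n = g ((ρ:ℂ) * eθ)
    rw [hfeq' _ hmem]
    field_simp
  -- apply the core contradiction
  exact core_contradiction hgd hg0 hgbd hEt hpos (by rw [hE]; exact fun θ hθ => hθ.1)
end
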